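/- Let Λ : M_N(ℂ) → M_N(ℂ) be a k-positive Hermiticity-preserving linear map, and let Λ† be its adjoint with respect to the Hilbert–Schmidt inner product, i.e. Tr(A† Λ(B)) = Tr(Λ†(A†) B) for all A, B ∈ M_N(ℂ). Then Λ† is k-positive. -/

import Mathlib

open Matrix BigOperators
open scoped ComplexOrder

section AuxLemmas

lemma my_trace_mul_vecMulVec {n : Type*} [Fintype n] (M : Matrix n n ℂ) (z w : n → ℂ) :
    (M * vecMulVec z w).trace = w ⬝ᵥ M.mulVec z := by
  simp only [Matrix.trace, Matrix.diag, Matrix.mul_apply, Matrix.vecMulVec_apply,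
    dotProduct, Matrix.mulVec, Finset.mul_sum]
  refine Finset.sum_congr rfl fun s _ => ?_
  refine Finset.sum_congr rfl fun t _ => by ring

lemma my_trace_vecMulVec_mul {n : Type*} [Fintype n] (u v : n → ℂ) (M : Matrix n n ℂ) :
    (vecMulVec u v * M).trace = v ⬝ᵥ M.mulVec u := by
  rw [Matrix.trace_mul_comm, my_trace_mul_vecMulVec]

lemma my_eq_of_trace {n : Type*} [Fintype n] [DecidableEq n] (M M' : Matrix n n ℂ)
    (h : ∀ B : Matrix n n ℂ, (M * B).trace = (M' * B).trace) : M = M' := by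
  ext i j
  have h2 := h (Matrix.single j i 1)
  simpa [Matrix.trace, Matrix.diag, Matrix.mul_apply, Matrix.single,
    ite_and, Finset.sum_ite_eq, Finset.sum_ite_eq'] using h2

lemma my_sum_mulVec {n : Type*} [Fintype n] {ι : Type*} (s : Finset ι)
    (A : ι → Matrix n n ℂ) (x : n → ℂ) :
    (∑ i ∈ s, A i).mulVec x = ∑ i ∈ s, (A i).mulVec x := by
  ext j
  simp [Matrix.mulVec, dotProduct, Matrix.sum_apply, Finset.sum_mul]
  rw [Finset.sum_comm]

lemma my_dotProduct_sum {n : Type*} [Fintype n] {ι : Type*} (s : Finset ι)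
    (v : n → ℂ) (f : ι → n → ℂ) :
    v ⬝ᵥ (∑ i ∈ s, f i) = ∑ i ∈ s, v ⬝ᵥ f i := by
  simp [dotProduct, Finset.sum_apply, Finset.mul_sum]
  rw [Finset.sum_comm]

lemma my_sum_swap4 {R ι κ μ ν : Type*} [AddCommMonoid R] [Fintype ι] [Fintype κ] [Fintype μ]
    [Fintype ν] (F : ι → κ → μ → ν → R) :
    ∑ i, ∑ j, ∑ a, ∑ b, F i j a b = ∑ b, ∑ a, ∑ j, ∑ i, F i j a b := by
  let e : (ν × μ × κ × ι) ≃ (ι × κ × μ × ν) :=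
    ⟨fun x => (x.2.2.2, x.2.2.1, x.2.1, x.1), fun x => (x.2.2.2, x.2.2.1, x.2.1, x.1),
     fun _ => rfl, fun _ => rfl⟩
  have h1 : ∑ p : ι × κ × μ × ν, F p.1 p.2.1 p.2.2.1 p.2.2.2
      = ∑ i, ∑ j, ∑ a, ∑ b, F i j a b := by
    simp_rw [Fintype.sum_prod_type]
  have h2 : ∑ q : ν × μ × κ × ι, F q.2.2.2 q.2.2.1 q.2.1 q.1
      = ∑ b, ∑ a, ∑ j, ∑ i, F i j a b := by
    simp_rw [Fintype.sum_prod_type]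
  rw [← h1, ← h2]
  exact (Fintype.sum_equiv e (fun q => F q.2.2.2 q.2.2.1 q.2.1 q.1)
    (fun p => F p.1 p.2.1 p.2.2.1 p.2.2.2) fun x => by rfl).symm

lemma my_vecMulVec_lincomb {N : ℕ} (c d : Fin N → ℂ) (u v : Fin N → Fin N → ℂ) :
    vecMulVec (fun s => ∑ a, c a * u a s) (star fun t => ∑ b, d b * v b t)
      = ∑ a, ∑ b, (c a * star (d b)) • vecMulVec (u a) (star (v b)) := by
  ext s t
  simp only [Matrix.vecMulVec_apply, Pi.star_apply, star_sum, star_mul', Matrix.sum_apply,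
    Matrix.smul_apply, smul_eq_mul, Finset.sum_mul_sum]
  refine Finset.sum_congr rfl fun a _ => Finset.sum_congr rfl fun b _ => by ring

lemma my_quad_expand {N : ℕ} (Λ' : Matrix (Fin N) (Fin N) ℂ →ₗ[ℂ] Matrix (Fin N) (Fin N) ℂ)
    (c d : Fin N → ℂ) (u v : Fin N → Fin N → ℂ) (w z : Fin N → ℂ) :
    star w ⬝ᵥ (Λ' (vecMulVec (fun s => ∑ a, c a * u a s)
        (star fun t => ∑ b, d b * v b t))).mulVec z
      = ∑ a, ∑ b, (c a * star (d b)) *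
          (star w ⬝ᵥ (Λ' (vecMulVec (u a) (star (v b)))).mulVec z) := by
  rw [my_vecMulVec_lincomb, map_sum, my_sum_mulVec, my_dotProduct_sum]
  refine Finset.sum_congr rfl fun a _ => ?_
  rw [map_sum, my_sum_mulVec, my_dotProduct_sum]
  refine Finset.sum_congr rfl fun b _ => ?_
  rw [_root_.map_smul, Matrix.smul_mulVec, dotProduct_smul, smul_eq_mul]

lemma my_exists_factorization {N : ℕ} (A : Matrix (Fin N) (Fin N) ℂ) :
    ∃ B C : Matrix (Fin N) (Fin N) ℂ, A = B * C ∧ B.rank ≤ A.rank := by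
  classical
  set V : Submodule ℂ (Fin N → ℂ) := Submodule.span ℂ (Set.range Aᵀ) with hV
  have hr : A.rank = Module.finrank ℂ V := A.rank_eq_finrank_span_cols
  have hrN : Module.finrank ℂ V ≤ N := by
    rw [← hr]; simpa using A.rank_le_card_width
  set r := Module.finrank ℂ V with hrdef
  let b : Module.Basis (Fin r) ℂ V := Module.finBasis ℂ V
  have hmem : ∀ j, Aᵀ j ∈ V := fun j => Submodule.subset_span ⟨j, rfl⟩
  set B : Matrix (Fin N) (Fin N) ℂ :=
    Matrix.of (fun i a => if h : (a : ℕ) < r then ((b ⟨a, h⟩ : Fin N → ℂ) i) else 0) with hB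
  set C : Matrix (Fin N) (Fin N) ℂ :=
    Matrix.of (fun a j => if h : (a : ℕ) < r then b.repr ⟨Aᵀ j, hmem j⟩ ⟨a, h⟩ else 0) with hC
  refine ⟨B, C, ?_, ?_⟩
  · ext i j
    set g : ℕ → ℂ := fun x => if h : x < r then
      ((b ⟨x, h⟩ : Fin N → ℂ) i) * b.repr ⟨Aᵀ j, hmem j⟩ ⟨x, h⟩ else 0 with hg
    have key : ∀ a : Fin N, B i a * C a j = g (a : ℕ) := by
      intro a
      by_cases h : (a : ℕ) < r <;> simp [hB, hC, hg, h]
    calc A i j = ((⟨Aᵀ j, hmem j⟩ : V) : Fin N → ℂ) i := rfl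
      _ = ((∑ a : Fin r, b.repr ⟨Aᵀ j, hmem j⟩ a • b a : V) : Fin N → ℂ) i := by
          rw [b.sum_repr ⟨Aᵀ j, hmem j⟩]
      _ = ∑ a : Fin r, g (a : ℕ) := by
          rw [Submodule.coe_sum, Finset.sum_apply]
          simp [hg, Fin.eta, mul_comm]
      _ = ∑ x ∈ Finset.range r, g x := Fin.sum_univ_eq_sum_range g r
      _ = ∑ x ∈ Finset.range N, g x := Finset.sum_subset (Finset.range_subset_range.mpr hrN)
          (fun x _ hx => dif_neg (by simpa using hx))
      _ = ∑ a : Fin N, g (a : ℕ) := (Fin.sum_univ_eq_sum_range g N).symm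
      _ = (B * C) i j := by
          rw [Matrix.mul_apply]
          exact (Finset.sum_congr rfl fun a _ => key a).symm
  · rw [hr, B.rank_eq_finrank_span_cols]
    apply Submodule.finrank_mono
    rw [Submodule.span_le]
    rintro x ⟨a, rfl⟩
    by_cases h : (a : ℕ) < r
    · have : B.col a = ((b ⟨a, h⟩ : V) : Fin N → ℂ) := by
        funext i; simp [hB, h]
      rw [this]; exact SetLike.coe_mem _
    · have : B.col a = 0 := by
        funext i; simp [hB, h]
      rw [this]; exact V.zero_mem

end AuxLemmas

/-- The `n × n` matrix `M_ψ` associated to a vector `ψ ∈ ℂ^α ⊗ ℂ^β`,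
with entries `(M_ψ)_{ij} = ⟨e_i ⊗ e_j, ψ⟩ = ψ (i, j)`. -/
def matOfVec {α β : Type*} (ψ : α × β → ℂ) : Matrix α β ℂ :=
  Matrix.of fun i j => ψ (i, j)

/-- The Schmidt rank of a bipartite vector is the rank of its associated matrix. -/
noncomputable def schmidtRank {α β : Type*} [Fintype β] (ψ : α × β → ℂ) : ℕ :=
  (matOfVec ψ).rank

/-- `ψ` is a unit vector. -/
def IsUnitVec {γ : Type*} [Fintype γ] (ψ : γ → ℂ) : Prop :=
  ∑ x, Complex.normSq (ψ x) = 1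

/-- The outer product `|ψ⟩⟨ψ|`. -/
def outer {γ : Type*} (ψ : γ → ℂ) : Matrix γ γ ℂ :=
  Matrix.of fun x y => ψ x * star (ψ y)

/-- `ρ ∈ S_k`: `ρ` admits a decomposition `ρ = ∑ i, p i • |ψ i⟩⟨ψ i|` with `p i ≥ 0`,
`∑ i, p i = 1`, each `ψ i` a unit vector of Schmidt rank at most `k`. -/
def InSchmidtClass {α : Type*} [Fintype α] (k : ℕ)
    (ρ : Matrix (α × α) (α × α) ℂ) : Prop :=
  ∃ (m : ℕ) (p : Fin m → ℝ) (ψ : Fin m → α × α → ℂ),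
    (∀ i, 0 ≤ p i) ∧ (∑ i, p i) = 1 ∧
    (∀ i, IsUnitVec (ψ i)) ∧ (∀ i, schmidtRank (ψ i) ≤ k) ∧
    ρ = ∑ i, (p i : ℂ) • outer (ψ i)

/-- The map `1 ⊗ Λ`, applying `Λ` to each block of a matrix indexed by `γ × Fin n`. -/
def blockMap {γ : Type*} {n m : ℕ}
    (Λ : Matrix (Fin n) (Fin n) ℂ → Matrix (Fin m) (Fin m) ℂ)
    (X : Matrix (γ × Fin n) (γ × Fin n) ℂ) : Matrix (γ × Fin m) (γ × Fin m) ℂ :=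
  Matrix.of fun a b => Λ (Matrix.of fun s t => X (a.1, s) (b.1, t)) a.2 b.2

/-- `Λ` is Hermiticity-preserving: `Λ(X†) = Λ(X)†`. -/
def HermPreserving {n m : ℕ}
    (Λ : Matrix (Fin n) (Fin n) ℂ → Matrix (Fin m) (Fin m) ℂ) : Prop :=
  ∀ X, Λ Xᴴ = (Λ X)ᴴ

/-- `Λ` is `k`-positive: `(1 ⊗ Λ)(|ψ⟩⟨ψ|)` is positive semidefinite for every
unit vector `ψ ∈ ℂ^N ⊗ ℂ^N` of Schmidt rank at most `k`. -/
def kPositive {N : ℕ} (k : ℕ)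
    (Λ : Matrix (Fin N) (Fin N) ℂ → Matrix (Fin N) (Fin N) ℂ) : Prop :=
  ∀ ψ : Fin N × Fin N → ℂ, IsUnitVec ψ → schmidtRank ψ ≤ k →
    (blockMap Λ (outer ψ)).PosSemidef


section AuxLemmas2

lemma my_quad_blockMap {N n : ℕ}
    (Λ' : Matrix (Fin n) (Fin n) ℂ → Matrix (Fin n) (Fin n) ℂ)
    (ψ φ : Fin N × Fin n → ℂ) :
    star φ ⬝ᵥ (blockMap Λ' (outer ψ)).mulVec φ =
      ∑ i : Fin N, ∑ j : Fin N,
        star (fun s => φ (i, s)) ⬝ᵥ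
          (Λ' (vecMulVec (fun s => ψ (i, s)) (star fun t => ψ (j, t)))).mulVec
            (fun t => φ (j, t)) := by
  have hblock : ∀ i j : Fin N,
      (Matrix.of fun s t => (outer ψ) (i, s) (j, t))
        = vecMulVec (fun s => ψ (i, s)) (star fun t => ψ (j, t)) := by
    intro i j; ext s t
    simp [outer, vecMulVec_apply]
  simp only [dotProduct, Matrix.mulVec, blockMap, Matrix.of_apply, Pi.star_apply,
    Fintype.sum_prod_type]
  simp_rw [Finset.mul_sum]
  refine Finset.sum_congr rfl fun i _ => ?_
  rw [Finset.sum_comm]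
  refine Finset.sum_congr rfl fun j _ => Finset.sum_congr rfl fun s _ =>
    Finset.sum_congr rfl fun t _ => ?_
  rw [hblock i j]

lemma my_blockMap_smul {N : ℕ} (Λ' : Matrix (Fin N) (Fin N) ℂ →ₗ[ℂ] Matrix (Fin N) (Fin N) ℂ)
    (c : ℂ) (X : Matrix (Fin N × Fin N) (Fin N × Fin N) ℂ) :
    blockMap (⇑Λ') (c • X) = c • blockMap (⇑Λ') X := by
  ext p q
  show (Λ' (Matrix.of fun s t => (c • X) (p.1, s) (q.1, t))) p.2 q.2 = _
  have : (Matrix.of fun s t => (c • X) (p.1, s) (q.1, t))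
      = c • (Matrix.of fun s t => X (p.1, s) (q.1, t)) := by
    ext s t; simp
  rw [this, _root_.map_smul]
  simp [blockMap]

lemma my_blockMap_zero {N : ℕ} (Λ' : Matrix (Fin N) (Fin N) ℂ →ₗ[ℂ] Matrix (Fin N) (Fin N) ℂ) :
    blockMap (⇑Λ') (0 : Matrix (Fin N × Fin N) (Fin N × Fin N) ℂ) = 0 := by
  ext p q
  show (Λ' (Matrix.of fun s t => (0 : Matrix (Fin N × Fin N) (Fin N × Fin N) ℂ) (p.1, s) (q.1, t)))
      p.2 q.2 = 0
  have : (Matrix.of fun s t => (0 : Matrix (Fin N × Fin N) (Fin N × Fin N) ℂ) (p.1, s) (q.1, t))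
      = (0 : Matrix (Fin N) (Fin N) ℂ) := rfl
  rw [this, map_zero]
  rfl

lemma my_pos_aux {N k : ℕ} (Λ : Matrix (Fin N) (Fin N) ℂ →ₗ[ℂ] Matrix (Fin N) (Fin N) ℂ)
    (hpos : kPositive k (⇑Λ)) (χ ω : Fin N × Fin N → ℂ)
    (hrk : (matOfVec χ).rank ≤ k) :
    0 ≤ star ω ⬝ᵥ (blockMap (⇑Λ) (outer χ)).mulVec ω := by
  set c : ℝ := ∑ x, Complex.normSq (χ x) with hc
  have hc0 : (0:ℝ) ≤ c := Finset.sum_nonneg fun x _ => Complex.normSq_nonneg _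
  by_cases hcz : c = 0
  · have hχ0 : χ = 0 := by
      funext x
      have hall := (Finset.sum_eq_zero_iff_of_nonneg
        (fun x _ => Complex.normSq_nonneg (χ x))).mp (hc ▸ hcz)
      exact Complex.normSq_eq_zero.mp (hall x (Finset.mem_univ x))
    have houter0 : outer χ = 0 := by
      ext x y; simp [outer, hχ0]
    rw [houter0, my_blockMap_zero, Matrix.zero_mulVec, dotProduct_zero]
  · have hcpos : (0:ℝ) < c := lt_of_le_of_ne hc0 (Ne.symm hcz)
    have hsq : ((Real.sqrt c : ℂ))⁻¹ * ((Real.sqrt c : ℂ))⁻¹ = ((c : ℂ))⁻¹ := by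
      rw [← mul_inv]
      norm_cast
      rw [Real.mul_self_sqrt hc0]
    set χ' : Fin N × Fin N → ℂ := fun x => ((Real.sqrt c : ℂ))⁻¹ * χ x with hχ'
    have hcne : (c : ℂ) ≠ 0 := by exact_mod_cast hcz
    have hns : ∀ x, Complex.normSq (χ' x) = c⁻¹ * Complex.normSq (χ x) := by
      intro x
      rw [hχ']
      rw [Complex.normSq_mul, ← Complex.ofReal_inv, Complex.normSq_ofReal]
      congr 1
      rw [← mul_inv, Real.mul_self_sqrt hc0]
    have hunit' : IsUnitVec χ' := by
      show ∑ x, Complex.normSq (χ' x) = 1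
      simp_rw [hns]
      rw [← Finset.mul_sum, ← hc, inv_mul_cancel₀ hcz]
    have hr' : schmidtRank χ' ≤ k := by
      have hm : matOfVec χ' = (((Real.sqrt c : ℂ))⁻¹ • (1 : Matrix (Fin N) (Fin N) ℂ))
          * matOfVec χ := by
        rw [Matrix.smul_mul, one_mul]
        ext i j
        simp [matOfVec, hχ']
      rw [schmidtRank, hm]
      exact le_trans (Matrix.rank_mul_le_right _ _) hrk
    have hPSD := hpos χ' hunit' hr'
    have houter : outer χ = (c : ℂ) • outer χ' := by
      ext x y
      show χ x * star (χ y) = (c:ℂ) * (χ' x * star (χ' y))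
      rw [hχ']
      have hstar : star (((Real.sqrt c : ℂ))⁻¹ * χ y)
          = ((Real.sqrt c : ℂ))⁻¹ * star (χ y) := by
        rw [star_mul', star_inv₀]
        congr 2
        exact Complex.conj_ofReal _
      rw [hstar]
      rw [show (c:ℂ) * (((Real.sqrt c : ℂ))⁻¹ * χ x * (((Real.sqrt c : ℂ))⁻¹ * star (χ y)))
          = ((c:ℂ) * (((Real.sqrt c : ℂ))⁻¹ * ((Real.sqrt c : ℂ))⁻¹)) * (χ x * star (χ y))
          from by ring]
      rw [hsq, mul_inv_cancel₀ hcne, one_mul]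
    rw [houter, my_blockMap_smul Λ (c:ℂ) (outer χ'), Matrix.smul_mulVec,
      dotProduct_smul, smul_eq_mul]
    have hcnn : (0:ℂ) ≤ (c:ℂ) := by exact_mod_cast hc0
    exact mul_nonneg hcnn (hPSD.dotProduct_mulVec_nonneg ω)

end AuxLemmas2

/-- If `Λ` is a `k`-positive Hermiticity-preserving linear map on `M_N(ℂ)`
and `Λ†` is its adjoint with respect to the Hilbert–Schmidt inner product
(`Tr(A† Λ(B)) = Tr(Λ†(A†) B)` for all `A, B`), then `Λ†` is `k`-positive. -/
theorem adjoint_kPositive {N k : ℕ} (hk : 1 ≤ k)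
    (Λ Λd : Matrix (Fin N) (Fin N) ℂ →ₗ[ℂ] Matrix (Fin N) (Fin N) ℂ)
    (hherm : HermPreserving (⇑Λ))
    (hadj : ∀ A B : Matrix (Fin N) (Fin N) ℂ, (Aᴴ * Λ B).trace = (Λd Aᴴ * B).trace)
    (hpos : kPositive k (⇑Λ)) :
    kPositive k (⇑Λd) := by
  classical
  have hadj' : ∀ C B : Matrix (Fin N) (Fin N) ℂ, (C * Λ B).trace = (Λd C * B).trace := by
    intro C B
    simpa using hadj Cᴴ B
  have key : ∀ u v w z : Fin N → ℂ,
      star w ⬝ᵥ (Λd (vecMulVec u (star v))).mulVec z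
        = star v ⬝ᵥ (Λ (vecMulVec z (star w))).mulVec u := by
    intro u v w z
    rw [← my_trace_mul_vecMulVec (Λd (vecMulVec u (star v))) z (star w), ← hadj',
      my_trace_vecMulVec_mul]
  have hdherm : HermPreserving (⇑Λd) := by
    intro X
    apply my_eq_of_trace
    intro B
    have h1 : (Λd Xᴴ * B).trace = (Xᴴ * Λ B).trace := (hadj' Xᴴ B).symm
    have h2 : ((Λd X)ᴴ * B).trace = (Xᴴ * Λ B).trace := by
      calc ((Λd X)ᴴ * B).trace = ((Bᴴ * Λd X)ᴴ).trace := by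
            rw [Matrix.conjTranspose_mul, Matrix.conjTranspose_conjTranspose]
        _ = star ((Bᴴ * Λd X).trace) := Matrix.trace_conjTranspose _
        _ = star ((Λd Xᴴᴴ * Bᴴ).trace) := by
            rw [Matrix.trace_mul_comm, Matrix.conjTranspose_conjTranspose]
        _ = star ((Xᴴᴴ * Λ Bᴴ).trace) := by rw [hadj']
        _ = star ((X * (Λ B)ᴴ).trace) := by
            rw [Matrix.conjTranspose_conjTranspose, hherm B]
        _ = (((X * (Λ B)ᴴ)ᴴ).trace) := (Matrix.trace_conjTranspose _).symm
        _ = ((Λ B * Xᴴ).trace) := by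
            rw [Matrix.conjTranspose_mul, Matrix.conjTranspose_conjTranspose]
        _ = (Xᴴ * Λ B).trace := Matrix.trace_mul_comm _ _
    rw [h1, h2]
  intro ψ hunit hrank
  obtain ⟨B, C, hBC, hBrank⟩ := my_exists_factorization (matOfVec ψ)
  have hψ : ∀ i s : Fin N, ψ (i, s) = ∑ a, B i a * C a s := by
    intro i s
    have h0 : matOfVec ψ i s = (B * C) i s := by rw [← hBC]
    simpa [matOfVec, Matrix.mul_apply] using h0
  have hherm2 : (blockMap (⇑Λd) (outer ψ)).IsHermitian := by
    show (blockMap (⇑Λd) (outer ψ))ᴴ = blockMap (⇑Λd) (outer ψ)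
    ext p q
    rw [Matrix.conjTranspose_apply]
    show star ((Λd (Matrix.of fun s t => (outer ψ) (q.1, s) (p.1, t))) q.2 p.2)
      = (Λd (Matrix.of fun s t => (outer ψ) (p.1, s) (q.1, t))) p.2 q.2
    have hb : (Matrix.of fun s t => (outer ψ) (q.1, s) (p.1, t))
        = (Matrix.of fun s t => (outer ψ) (p.1, s) (q.1, t))ᴴ := by
      ext s t; simp [outer, mul_comm]
    rw [hb, hdherm]
    simp [Matrix.conjTranspose_apply]
  refine Matrix.PosSemidef.of_dotProduct_mulVec_nonneg hherm2 fun φ => ?_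
  set χ : Fin N × Fin N → ℂ := fun p => ∑ j, star (B j p.1) * φ (j, p.2) with hχdef
  set ω : Fin N × Fin N → ℂ := fun p => C p.1 p.2 with hωdef
  have hL : ∀ i j : Fin N,
      star (fun s => φ (i, s)) ⬝ᵥ
        (Λd (vecMulVec (fun s => ψ (i, s)) (star fun t => ψ (j, t)))).mulVec
          (fun t => φ (j, t))
      = ∑ a, ∑ b, (B i a * star (B j b)) *
          (star (C b) ⬝ᵥ
            (Λ (vecMulVec (fun t => φ (j, t)) (star fun s => φ (i, s)))).mulVec (C a)) := by
    intro i j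
    have e1 : (fun s => ψ (i, s)) = fun s => ∑ a, B i a * C a s := funext fun s => hψ i s
    have e2 : (fun t => ψ (j, t)) = fun t => ∑ b, B j b * C b t := funext fun t => hψ j t
    rw [e1, e2, my_quad_expand Λd (B i) (B j) (fun a => C a) (fun b => C b)
      (fun s => φ (i, s)) (fun t => φ (j, t))]
    refine Finset.sum_congr rfl fun a _ => Finset.sum_congr rfl fun b _ => ?_
    rw [key (C a) (C b) (fun s => φ (i, s)) (fun t => φ (j, t))]
  have hR : ∀ b a : Fin N,
      star (fun t => ω (b, t)) ⬝ᵥ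
        (Λ (vecMulVec (fun t => χ (b, t)) (star fun s => χ (a, s)))).mulVec
          (fun s => ω (a, s))
      = ∑ j, ∑ i, (star (B j b) * B i a) *
          (star (C b) ⬝ᵥ
            (Λ (vecMulVec (fun t => φ (j, t)) (star fun s => φ (i, s)))).mulVec (C a)) := by
    intro b a
    have e1 : (fun t => χ (b, t)) = fun t => ∑ j, star (B j b) * φ (j, t) := by
      funext t; rw [hχdef]
    have e2 : (fun s => χ (a, s)) = fun s => ∑ i, star (B i a) * φ (i, s) := by
      funext s; rw [hχdef]
    have e3 : (fun t => ω (b, t)) = C b := by funext t; rw [hωdef]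
    have e4 : (fun s => ω (a, s)) = C a := by funext s; rw [hωdef]
    rw [e1, e2, e3, e4, my_quad_expand Λ (fun j => star (B j b)) (fun i => star (B i a))
      (fun j => fun t => φ (j, t)) (fun i => fun s => φ (i, s)) (C b) (C a)]
    simp [star_star]
  have main : star φ ⬝ᵥ (blockMap (⇑Λd) (outer ψ)).mulVec φ
      = star ω ⬝ᵥ (blockMap (⇑Λ) (outer χ)).mulVec ω := by
    rw [my_quad_blockMap, my_quad_blockMap]
    rw [Finset.sum_congr rfl fun i _ => Finset.sum_congr rfl fun j _ => hL i j]
    rw [Finset.sum_congr rfl fun b _ => Finset.sum_congr rfl fun a _ => hR b a]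
    rw [my_sum_swap4]
    refine Finset.sum_congr rfl fun b _ => Finset.sum_congr rfl fun a _ =>
      Finset.sum_congr rfl fun j _ => Finset.sum_congr rfl fun i _ => by ring
  rw [main]
  apply my_pos_aux Λ hpos
  have hmeq : matOfVec χ = Bᴴ * matOfVec φ := by
    ext i j
    simp [matOfVec, hχdef, Matrix.mul_apply, Matrix.conjTranspose_apply]
  rw [hmeq]
  calc (Bᴴ * matOfVec φ).rank ≤ Bᴴ.rank := Matrix.rank_mul_le_left _ _
    _ = B.rank := B.rank_conjTranspose
    _ ≤ (matOfVec ψ).rank := hBrank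
    _ ≤ k := hrank
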